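/- The projectors Π_p satisfy the shifting relations: (α)·Π_p = Π_{p+1}·(α) for every covector α ∈ V*, and Π_p·(v) = (v)·Π_{p+1} for every vector v ∈ V (with the convention Π_{−1} = 0 and Π_{n+1} = 0). -/

import Mathlib

noncomputable section

open CliffordAlgebra

variable (F : Type*) [Field F] (V : Type*) [AddCommGroup V] [Module F V]

/-- The quadratic form `Q[v ⊕ α] = α v` on `W = V ⊕ V*`. -/
def Qf : QuadraticForm F (V × Module.Dual F V) where
  toFun w := w.2 w.1
  toFun_smul a w := by simp [smul_eq_mul, mul_assoc]
  exists_companion' :=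
    ⟨LinearMap.mk₂ F (fun w w' => w.2 w'.1 + w'.2 w.1)
      (fun m m' n => by simp; ring) (fun c m n => by simp; ring)
      (fun m n n' => by simp; ring) (fun c m n => by simp; ring),
     fun w w' => by simp; ring⟩

/-- Image of a vector `v ∈ V` in the Clifford algebra. -/
def ιv (v : V) : CliffordAlgebra (Qf F V) := ι (Qf F V) (v, 0)

/-- Image of a covector `α ∈ V*` in the Clifford algebra. -/
def ιd (α : Module.Dual F V) : CliffordAlgebra (Qf F V) := ι (Qf F V) ((0 : V), α)

variable {n : ℕ} (bV : Module.Basis (Fin n) F V)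

/-- The fundamental idempotent `P = N̄₁⋯N̄ₙ` with `N̄ⱼ = (eⱼ)(eʲ)`. -/
def Pel : CliffordAlgebra (Qf F V) :=
  (List.ofFn fun j : Fin n => ιv F V (bV j) * ιd F V (bV.coord j)).prod

/-- The projector `Π_p = (p!)⁻¹ Σ_{j₁,…,j_p} (e^{j₁})⋯(e^{j_p}) P (e_{j_p})⋯(e_{j₁})`. -/
def Pip (p : ℕ) : CliffordAlgebra (Qf F V) :=
  ((p.factorial : F))⁻¹ •
    ∑ j : Fin p → Fin n,
      (List.ofFn fun a => ιd F V (bV.coord (j a))).prod * Pel F V bV *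
        (List.ofFn fun a => ιv F V (bV (j a))).reverse.prod


section Aux

variable {F V}

lemma Qf_apply (w : V × Module.Dual F V) : Qf F V w = w.2 w.1 := rfl

lemma ιd_sq (α : Module.Dual F V) : ιd F V α * ιd F V α = 0 := by
  rw [ιd, ι_sq_scalar]; simp [Qf_apply]

lemma ιv_sq (v : V) : ιv F V v * ιv F V v = 0 := by
  rw [ιv, ι_sq_scalar]; simp [Qf_apply]

lemma ιd_mul_ιd (α β : Module.Dual F V) :
    ιd F V α * ιd F V β = -(ιd F V β * ιd F V α) := by
  refine ι_mul_ι_comm_of_isOrtho ?_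
  simp [QuadraticMap.IsOrtho, Qf_apply]

lemma ιv_mul_ιv (v w : V) :
    ιv F V v * ιv F V w = -(ιv F V w * ιv F V v) := by
  refine ι_mul_ι_comm_of_isOrtho ?_
  simp [QuadraticMap.IsOrtho, Qf_apply]

lemma ιv_mul_ιd (v : V) (α : Module.Dual F V) :
    ιv F V v * ιd F V α = algebraMap F _ (α v) - ιd F V α * ιv F V v := by
  have h := ι_mul_ι_comm (Q := Qf F V) (v, (0 : Module.Dual F V)) ((0 : V), α)
  have hp : QuadraticMap.polar (Qf F V) (v, (0 : Module.Dual F V)) ((0 : V), α) = α v := by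
    simp [QuadraticMap.polar, Qf_apply]
  rw [hp] at h
  exact h

lemma ιd_mul_ιv (α : Module.Dual F V) (v : V) :
    ιd F V α * ιv F V v = algebraMap F _ (α v) - ιv F V v * ιd F V α := by
  have h := ι_mul_ι_comm (Q := Qf F V) ((0 : V), α) (v, (0 : Module.Dual F V))
  have hp : QuadraticMap.polar (Qf F V) ((0 : V), α) (v, (0 : Module.Dual F V)) = α v := by
    simp [QuadraticMap.polar, Qf_apply]
  rw [hp] at h
  exact h

/-! Swap lemmas with a trailing factor. -/

lemma swap_dd (α β : Module.Dual F V) (x : CliffordAlgebra (Qf F V)) :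
    ιd F V α * (ιd F V β * x) = -(ιd F V β * (ιd F V α * x)) := by
  rw [← mul_assoc, ιd_mul_ιd, neg_mul, mul_assoc]

lemma swap_vv (v w : V) (x : CliffordAlgebra (Qf F V)) :
    ιv F V v * (ιv F V w * x) = -(ιv F V w * (ιv F V v * x)) := by
  rw [← mul_assoc, ιv_mul_ιv, neg_mul, mul_assoc]

lemma swap_vd (v : V) (α : Module.Dual F V) (h : α v = 0) (x : CliffordAlgebra (Qf F V)) :
    ιv F V v * (ιd F V α * x) = -(ιd F V α * (ιv F V v * x)) := by
  rw [← mul_assoc, ιv_mul_ιd, h, map_zero, zero_sub, neg_mul, mul_assoc]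

lemma swap_dv (α : Module.Dual F V) (v : V) (h : α v = 0) (x : CliffordAlgebra (Qf F V)) :
    ιd F V α * (ιv F V v * x) = -(ιv F V v * (ιd F V α * x)) := by
  rw [← mul_assoc, ιd_mul_ιv, h, map_zero, zero_sub, neg_mul, mul_assoc]

variable {n : ℕ} {bV : Module.Basis (Fin n) F V}

lemma ιd_sum (α : Module.Dual F V) :
    ∑ k, α (bV k) • ιd F V (bV.coord k) = ιd F V α := by
  have h : ∀ β : Module.Dual F V,
      ιd F V β = ((ι (Qf F V)).comp (LinearMap.inr F V (Module.Dual F V))) β := fun _ => rfl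
  simp_rw [h, ← map_smul, ← map_sum, bV.sum_dual_apply_smul_coord]

lemma ιv_sum (v : V) :
    ∑ k, bV.coord k v • ιv F V (bV k) = ιv F V v := by
  have h : ∀ w : V,
      ιv F V w = ((ι (Qf F V)).comp (LinearMap.inl F V (Module.Dual F V))) w := fun _ => rfl
  simp_rw [h, ← map_smul, ← map_sum]
  congr 1
  simp_rw [Module.Basis.coord_apply, bV.sum_repr v]

lemma coord_apply_ne {j k : Fin n} (h : j ≠ k) : bV.coord k (bV j) = 0 := by
  simp [Module.Basis.coord_apply, Finsupp.single_apply, h]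

/-- key commutation of covector generators through the nilpotents. -/
lemma prod_mul_ιd (l : List (Fin n)) (k : Fin n) :
    (l.map fun j => ιv F V (bV j) * ιd F V (bV.coord j)).prod * ιd F V (bV.coord k) =
      if k ∈ l then 0 else
        ιd F V (bV.coord k) * (l.map fun j => ιv F V (bV j) * ιd F V (bV.coord j)).prod := by
  induction l with
  | nil => simp
  | cons j t ih =>
    simp only [List.map_cons, List.prod_cons, List.mem_cons, mul_assoc]
    rw [ih]
    by_cases ht : k ∈ t
    · simp [ht]
    · rw [if_neg ht]
      by_cases hjk : k = j
      · subst hjk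
        rw [if_pos (Or.inl rfl), ← mul_assoc (ιd F V (bV.coord k)), ιd_sq, zero_mul, mul_zero]
      · rw [if_neg (by simp [hjk, ht]), swap_dd, mul_neg,
          swap_vd _ _ (coord_apply_ne (Ne.symm hjk)), neg_neg]

lemma ιv_mul_prod (l : List (Fin n)) (k : Fin n) :
    ιv F V (bV k) * (l.map fun j => ιv F V (bV j) * ιd F V (bV.coord j)).prod =
      if k ∈ l then 0 else
        (l.map fun j => ιv F V (bV j) * ιd F V (bV.coord j)).prod * ιv F V (bV k) := by
  induction l with
  | nil => simp
  | cons j t ih =>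
    simp only [List.map_cons, List.prod_cons, List.mem_cons, mul_assoc]
    by_cases hjk : k = j
    · subst hjk
      rw [if_pos (Or.inl rfl), ← mul_assoc, ιv_sq, zero_mul]
    · rw [swap_vv, swap_vd _ _ (coord_apply_ne hjk), mul_neg, neg_neg, ih]
      by_cases ht : k ∈ t
      · simp [ht]
      · rw [if_neg ht, if_neg (by simp [hjk, ht])]

end Aux


section PelLemmas

variable {F V} {n : ℕ} {bV : Module.Basis (Fin n) F V}

lemma Pel_eq : Pel F V bV =
    ((List.finRange n).map fun j => ιv F V (bV j) * ιd F V (bV.coord j)).prod := by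
  rw [Pel, List.ofFn_eq_map]

lemma Pel_mul_coord (k : Fin n) : Pel F V bV * ιd F V (bV.coord k) = 0 := by
  rw [Pel_eq, prod_mul_ιd, if_pos (List.mem_finRange k)]

lemma coord_mul_Pel (k : Fin n) : ιv F V (bV k) * Pel F V bV = 0 := by
  rw [Pel_eq, ιv_mul_prod, if_pos (List.mem_finRange k)]

lemma Pel_mul_ιd (α : Module.Dual F V) : Pel F V bV * ιd F V α = 0 := by
  rw [← ιd_sum (bV := bV) α, Finset.mul_sum]
  simp [mul_smul_comm, Pel_mul_coord]

lemma ιv_mul_Pel (v : V) : ιv F V v * Pel F V bV = 0 := by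
  rw [← ιv_sum (bV := bV) v, Finset.sum_mul]
  simp [smul_mul_assoc, coord_mul_Pel]

end PelLemmas

/-- The basic "shift" operator `T x = ∑ₖ (eᵏ) x (eₖ)`. -/
def Tm (x : CliffordAlgebra (Qf F V)) : CliffordAlgebra (Qf F V) :=
  ∑ k : Fin n, ιd F V (bV.coord k) * x * ιv F V (bV k)

section Tlemmas

variable {F V} {n : ℕ} {bV : Module.Basis (Fin n) F V}

lemma Tm_zero : Tm F V bV 0 = 0 := by simp [Tm]

lemma Tm_nsmul (m : ℕ) (x : CliffordAlgebra (Qf F V)) :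
    Tm F V bV (m • x) = m • Tm F V bV x := by
  rw [Tm, Tm, Finset.smul_sum]
  refine Finset.sum_congr rfl fun k _ => ?_
  rw [mul_smul_comm, smul_mul_assoc]

lemma ιd_mul_Tm (α : Module.Dual F V) (x : CliffordAlgebra (Qf F V)) :
    ιd F V α * Tm F V bV x = -Tm F V bV (ιd F V α * x) := by
  rw [Tm, Tm, Finset.mul_sum, ← Finset.sum_neg_distrib]
  refine Finset.sum_congr rfl fun k _ => ?_
  rw [← mul_assoc, ← mul_assoc, ιd_mul_ιd]
  simp [mul_assoc]

lemma Tm_mul_ιv (v : V) (x : CliffordAlgebra (Qf F V)) :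
    Tm F V bV x * ιv F V v = -Tm F V bV (x * ιv F V v) := by
  rw [Tm, Tm, Finset.sum_mul, ← Finset.sum_neg_distrib]
  refine Finset.sum_congr rfl fun k _ => ?_
  rw [mul_assoc, mul_assoc, ιv_mul_ιv]
  simp [mul_assoc]

lemma Tm_mul_ιd (α : Module.Dual F V) (x : CliffordAlgebra (Qf F V)) :
    Tm F V bV x * ιd F V α = ιd F V α * x - Tm F V bV (x * ιd F V α) := by
  rw [Tm, Tm, Finset.sum_mul]
  have h : ∀ k : Fin n, ιd F V (bV.coord k) * x * ιv F V (bV k) * ιd F V α =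
      α (bV k) • (ιd F V (bV.coord k) * x) -
        ιd F V (bV.coord k) * (x * ιd F V α) * ιv F V (bV k) := by
    intro k
    rw [mul_assoc (ιd F V (bV.coord k) * x), ιv_mul_ιd, mul_sub]
    congr 1
    · rw [Algebra.smul_def, ← Algebra.commutes]
    · rw [mul_assoc, mul_assoc, mul_assoc]
  simp_rw [h, Finset.sum_sub_distrib, ← smul_mul_assoc, ← Finset.sum_mul, ιd_sum]

lemma ιv_mul_Tm (v : V) (x : CliffordAlgebra (Qf F V)) :
    ιv F V v * Tm F V bV x = x * ιv F V v - Tm F V bV (ιv F V v * x) := by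
  rw [Tm, Tm, Finset.mul_sum]
  have h : ∀ k : Fin n, ιv F V v * (ιd F V (bV.coord k) * x * ιv F V (bV k)) =
      bV.coord k v • (x * ιv F V (bV k)) -
        ιd F V (bV.coord k) * (ιv F V v * x) * ιv F V (bV k) := by
    intro k
    rw [← mul_assoc, ← mul_assoc, ιv_mul_ιd, sub_mul, sub_mul]
    congr 1
    · rw [← Algebra.smul_def, smul_mul_assoc]
    · rw [mul_assoc (ιd F V (bV.coord k)) (ιv F V v) x]
  simp_rw [h, Finset.sum_sub_distrib, ← mul_smul_comm, ← Finset.mul_sum, ιv_sum]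

lemma Tm_ιd_mul (α : Module.Dual F V) (x : CliffordAlgebra (Qf F V)) :
    Tm F V bV (ιd F V α * x) = -(ιd F V α * Tm F V bV x) := by
  rw [ιd_mul_Tm, neg_neg]

lemma Tm_mul_ιv' (v : V) (x : CliffordAlgebra (Qf F V)) :
    Tm F V bV (x * ιv F V v) = -(Tm F V bV x * ιv F V v) := by
  rw [Tm_mul_ιv, neg_neg]

end Tlemmas

/-- `Sp p = T^p(Pel)`. -/
def Sp (p : ℕ) : CliffordAlgebra (Qf F V) := (Tm F V bV)^[p] (Pel F V bV)

section Main

variable {F V} {n : ℕ} {bV : Module.Basis (Fin n) F V}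

lemma Sp_zero : Sp F V bV 0 = Pel F V bV := rfl

lemma Sp_succ (p : ℕ) : Sp F V bV (p + 1) = Tm F V bV (Sp F V bV p) :=
  Function.iterate_succ_apply' _ _ _

lemma sum_eq_Sp (p : ℕ) :
    (∑ j : Fin p → Fin n,
      (List.ofFn fun a => ιd F V (bV.coord (j a))).prod * Pel F V bV *
        (List.ofFn fun a => ιv F V (bV (j a))).reverse.prod) = Sp F V bV p := by
  induction p with
  | zero =>
    rw [Sp_zero, Fintype.sum_unique]
    simp
  | succ p ih =>
    rw [Sp_succ, ← ih, ← Equiv.sum_comp (Fin.consEquiv fun _ : Fin (p + 1) => Fin n),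
      Fintype.sum_prod_type, Tm]
    refine Finset.sum_congr rfl fun k _ => ?_
    rw [Finset.mul_sum, Finset.sum_mul]
    refine Finset.sum_congr rfl fun j _ => ?_
    simp only [Fin.consEquiv_apply, List.ofFn_succ, Fin.cons_zero, Fin.cons_succ,
      List.prod_cons, List.reverse_cons, List.prod_append, List.prod_singleton,
      List.prod_nil, mul_one, mul_assoc]

lemma Pip_eq (p : ℕ) : Pip F V bV p = ((p.factorial : F))⁻¹ • Sp F V bV p := by
  rw [Pip, sum_eq_Sp]

lemma Sp_mul_ιd (p : ℕ) (α : Module.Dual F V) :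
    Sp F V bV (p + 1) * ιd F V α = (p + 1) • (ιd F V α * Sp F V bV p) := by
  induction p with
  | zero =>
    rw [Sp_succ, Tm_mul_ιd, Sp_zero, Pel_mul_ιd, Tm_zero, sub_zero, zero_add, one_smul]
  | succ p ih =>
    rw [Sp_succ (p + 1), Tm_mul_ιd, ih, Tm_nsmul, Tm_ιd_mul, ← Sp_succ, smul_neg,
      sub_neg_eq_add]
    conv_rhs => rw [succ_nsmul]
    rw [add_comm]

lemma ιv_mul_Sp (p : ℕ) (v : V) :
    ιv F V v * Sp F V bV (p + 1) = (p + 1) • (Sp F V bV p * ιv F V v) := by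
  induction p with
  | zero =>
    rw [Sp_succ, ιv_mul_Tm, Sp_zero, ιv_mul_Pel, Tm_zero, sub_zero, zero_add, one_smul]
  | succ p ih =>
    rw [Sp_succ (p + 1), ιv_mul_Tm, ih, Tm_nsmul, Tm_mul_ιv', ← Sp_succ, smul_neg,
      sub_neg_eq_add]
    conv_rhs => rw [succ_nsmul]
    rw [add_comm]

end Main

/-- the shifting relations `(α)Π_p = Π_{p+1}(α)` and
`Π_p(v) = (v)Π_{p+1}` (the conventions `Π₋₁ = 0`, `Π_{n+1} = 0` hold
automatically here, since products of more than `n` isotropic covectors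
vanish). -/
theorem stmt19 [CharZero F] :
    (∀ (p : ℕ) (α : Module.Dual F V),
      ιd F V α * Pip F V bV p = Pip F V bV (p + 1) * ιd F V α) ∧
    (∀ (p : ℕ) (v : V),
      Pip F V bV p * ιv F V v = ιv F V v * Pip F V bV (p + 1)) := by
  have key : ∀ p : ℕ, ((p + 1).factorial : F)⁻¹ * ((p : F) + 1) = ((p.factorial : F))⁻¹ := by
    intro p
    have hp : ((p : F) + 1) ≠ 0 := Nat.cast_add_one_ne_zero p
    rw [Nat.factorial_succ, Nat.cast_mul, Nat.cast_add, Nat.cast_one, mul_inv,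
      mul_comm (((p : F) + 1))⁻¹, mul_assoc, inv_mul_cancel₀ hp, mul_one]
  constructor
  · intro p α
    rw [Pip_eq, Pip_eq, smul_mul_assoc, Sp_mul_ιd, mul_smul_comm,
      ← Nat.cast_smul_eq_nsmul F, smul_smul, Nat.cast_add, Nat.cast_one, key]
  · intro p v
    rw [Pip_eq, Pip_eq, smul_mul_assoc, mul_smul_comm, ιv_mul_Sp,
      ← Nat.cast_smul_eq_nsmul F, smul_smul, Nat.cast_add, Nat.cast_one, key]
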